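/- Let (u_α, v_α)_{α∈[d]} be pairs of words over a finite alphabet Σ of size b ≥ 1, defining morphisms U, V : [d]* → Σ* by U(w) = u_{w₁}u_{w₂}⋯u_{w_{|w|}} and V(w) = v_{w₁}v_{w₂}⋯v_{w_{|w|}}. Let A(u,v) be the 6×6 integer matrix built from the numeric representation σ (with rows (b^{2|u|},0,0,0,0,0), (0,b^{|u|+|v|},0,0,0,0), (0,0,b^{2|v|},0,0,0), (σ(u)b^{|u|}, σ(v)b^{|u|}, 0, b^{|u|}, 0, 0), (0, σ(u)b^{|v|}, σ(v)b^{|v|}, 0, b^{|v|}, 0), (σ(u)², 2σ(u)σ(v), σ(v)², 2σ(u), 2σ(v), 1)), and set A^{(α)} := A(u_α, v_α) for α ∈ [d]. Then for every word w ∈ [d]*, the matrix product A^{(w)} := A^{(w₁)}A^{(w₂)}⋯A^{(w_{|w|})} equals A(U(w), V(w)). -/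
import Mathlib


def numRep {S : Type*} (b : ℕ) (e : S ≃ Fin b) (w : List S) : ℕ :=
  ∑ j : Fin w.length, ((e (w.get j) : ℕ) + 1) * b ^ (w.length - 1 - (j : ℕ))

/-- The 6×6 integer encoding matrix `A(u,v)` built from the numeric representation `σ`. -/
def encMat {S : Type*} (b : ℕ) (e : S ≃ Fin b) (u v : List S) :
    Matrix (Fin 6) (Fin 6) ℤ :=
  !![(b : ℤ) ^ (2 * u.length), 0, 0, 0, 0, 0;
     0, (b : ℤ) ^ (u.length + v.length), 0, 0, 0, 0;
     0, 0, (b : ℤ) ^ (2 * v.length), 0, 0, 0;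
     (numRep b e u : ℤ) * (b : ℤ) ^ u.length, (numRep b e v : ℤ) * (b : ℤ) ^ u.length, 0,
       (b : ℤ) ^ u.length, 0, 0;
     0, (numRep b e u : ℤ) * (b : ℤ) ^ v.length, (numRep b e v : ℤ) * (b : ℤ) ^ v.length, 0,
       (b : ℤ) ^ v.length, 0;
     (numRep b e u : ℤ) ^ 2, 2 * (numRep b e u : ℤ) * (numRep b e v : ℤ), (numRep b e v : ℤ) ^ 2,
       2 * (numRep b e u : ℤ), 2 * (numRep b e v : ℤ), 1]

section
variable {α : Type*} (a0 a1 a2 a3 a4 a5 : α)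
lemma vec6_0 : (![a0,a1,a2,a3,a4,a5]) 0 = a0 := rfl
lemma vec6_1 : (![a0,a1,a2,a3,a4,a5]) 1 = a1 := rfl
lemma vec6_2 : (![a0,a1,a2,a3,a4,a5]) 2 = a2 := rfl
lemma vec6_3 : (![a0,a1,a2,a3,a4,a5]) 3 = a3 := rfl
lemma vec6_4 : (![a0,a1,a2,a3,a4,a5]) 4 = a4 := rfl
lemma vec6_5 : (![a0,a1,a2,a3,a4,a5]) 5 = a5 := rfl
lemma vec6_0' (h : 0 < 6) : (![a0,a1,a2,a3,a4,a5]) ⟨0,h⟩ = a0 := rfl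
lemma vec6_1' (h : 1 < 6) : (![a0,a1,a2,a3,a4,a5]) ⟨1,h⟩ = a1 := rfl
lemma vec6_2' (h : 2 < 6) : (![a0,a1,a2,a3,a4,a5]) ⟨2,h⟩ = a2 := rfl
lemma vec6_3' (h : 3 < 6) : (![a0,a1,a2,a3,a4,a5]) ⟨3,h⟩ = a3 := rfl
lemma vec6_4' (h : 4 < 6) : (![a0,a1,a2,a3,a4,a5]) ⟨4,h⟩ = a4 := rfl
lemma vec6_5' (h : 5 < 6) : (![a0,a1,a2,a3,a4,a5]) ⟨5,h⟩ = a5 := rfl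
end

lemma numRep_nil {S : Type*} (b : ℕ) (e : S ≃ Fin b) : numRep b e [] = 0 := by
  simp [numRep]

lemma numRep_cons {S : Type*} (b : ℕ) (e : S ≃ Fin b) (a : S) (w : List S) :
    numRep b e (a :: w) = ((e a : ℕ) + 1) * b ^ w.length + numRep b e w := by
  unfold numRep
  show (∑ j : Fin (w.length + 1),
      ((e ((a :: w).get j) : ℕ) + 1) * b ^ (w.length + 1 - 1 - (j : ℕ))) = _
  rw [Fin.sum_univ_succ]
  congr 1
  refine Finset.sum_congr rfl fun j _ => ?_
  have h : w.length + 1 - 1 - ((j : ℕ) + 1) = w.length - 1 - (j : ℕ) := by omega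
  rw [Fin.val_succ, h]
  rfl

lemma numRep_append {S : Type*} (b : ℕ) (e : S ≃ Fin b) (u w : List S) :
    numRep b e (u ++ w) = numRep b e u * b ^ w.length + numRep b e w := by
  induction u with
  | nil => simp [numRep_nil]
  | cons a u ih =>
    rw [List.cons_append, numRep_cons, numRep_cons, ih, List.length_append, pow_add]
    ring

lemma encMat_nil {S : Type*} (b : ℕ) (e : S ≃ Fin b) :
    encMat b e [] [] = 1 := by
  ext i j
  fin_cases i <;> fin_cases j <;>
    simp [encMat, numRep_nil, Matrix.one_apply, Matrix.vecHead, Matrix.vecTail, vec6_0, vec6_1, vec6_2, vec6_3, vec6_4, vec6_5,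
      vec6_0', vec6_1', vec6_2', vec6_3', vec6_4', vec6_5'] <;> rfl

set_option maxHeartbeats 2000000 in
lemma encMat_mul {S : Type*} (b : ℕ) (e : S ≃ Fin b) (u v u' v' : List S) :
    encMat b e u v * encMat b e u' v' = encMat b e (u ++ u') (v ++ v') := by
  have hu : (numRep b e (u ++ u') : ℤ)
      = numRep b e u * (b : ℤ) ^ u'.length + numRep b e u' := by
    rw [numRep_append]; push_cast; ring
  have hv : (numRep b e (v ++ v') : ℤ)
      = numRep b e v * (b : ℤ) ^ v'.length + numRep b e v' := by
    rw [numRep_append]; push_cast; ring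
  ext i j
  fin_cases i <;> fin_cases j <;>
    · simp only [encMat, Matrix.mul_apply, Fin.sum_univ_six, Matrix.of_apply,
        vec6_0, vec6_1, vec6_2, vec6_3, vec6_4, vec6_5,
        vec6_0', vec6_1', vec6_2', vec6_3', vec6_4', vec6_5', List.length_append, hu, hv,
        pow_add, two_mul, mul_add, add_mul]
      ring

/-- For a PCP instance `(u_α, v_α)_{α ∈ [d]}` with encoding matrices
`A^{(α)} = A(u_α, v_α)`, the matrix product `A^{(w)} = A^{(w₁)}⋯A^{(w_n)}`
equals `A(U(w), V(w))`, where `U(w) = u_{w₁}⋯u_{w_n}` and `V(w) = v_{w₁}⋯v_{w_n}`. -/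
theorem encMat_word_prod {S : Type*} (b d : ℕ) (hb : 1 ≤ b) (e : S ≃ Fin b)
    (u v : Fin d → List S) (w : List (Fin d)) :
    (w.map fun α => encMat b e (u α) (v α)).prod
      = encMat b e ((w.map u).flatten) ((w.map v).flatten) := by
  induction w with
  | nil => simp [encMat_nil]
  | cons a w ih =>
    simp only [List.map_cons, List.prod_cons, List.flatten_cons, ih, encMat_mul]
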